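/- For a vector r of positive integers r_1, …, r_n with even sum, suppose r_i = Σ_{j≠i} r_j for some index i. Then there is exactly one function N from unordered pairs of indices to nonnegative integers such that for every index m, Σ_{j≠m} N({m,j}) = r_m; namely N({i,j}) = r_j for j ≠ i and N({k,j}) = 0 for k,j ≠ i. -/
import Mathlib


/-- A multigraph on `{1,…,n}` with degree sequence `r`: a symmetric, loopless
nonnegative-integer weighting of pairs of distinct vertices whose degree at
each vertex `m` is `r m`. -/
def IsMultigraph {n : ℕ} (r : Fin n → ℕ) (N : Fin n → Fin n → ℕ) : Prop :=
  (∀ i j, N i j = N j i) ∧ (∀ i, N i i = 0) ∧ (∀ m, ∑ j, N m j = r m)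

/-- if `r i = Σ_{j≠i} r j`, the unique multigraph with degree
sequence `r` is the star at `i`: `N({i,j}) = r j` for `j ≠ i`, all other
multiplicities zero. -/
theorem stmt_5 (n : ℕ) (r : Fin n → ℕ) (hpos : ∀ m, 0 < r m)
    (heven : Even (∑ m, r m)) (i : Fin n)
    (hi : r i = ∑ j ∈ Finset.univ.erase i, r j) :
    IsMultigraph r (fun k j =>
      if k = j then 0 else if k = i then r j else if j = i then r k else 0) ∧
    ∀ N : Fin n → Fin n → ℕ, IsMultigraph r N →
      N = fun k j =>
        if k = j then 0 else if k = i then r j else if j = i then r k else 0 := by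
  constructor
  · refine ⟨?_, ?_, ?_⟩
    · intro a b
      by_cases hab : a = b
      · simp [hab]
      · by_cases ha : a = i <;> by_cases hb : b = i <;>
          simp_all [Ne.symm hab, fun h : a ≠ i => Ne.symm h, fun h : b ≠ i => Ne.symm h]
    · intro a; simp
    · intro m
      by_cases hm : m = i
      · subst hm
        rw [hi, ← Finset.sum_erase (a := m)
          (f := fun j => if m = j then 0 else if m = m then r j else if j = m then r m else 0)
          Finset.univ (by simp)]
        apply Finset.sum_congr rfl
        intro j hj
        simp only [Finset.mem_erase] at hj
        simp [Ne.symm hj.1]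
      · rw [Finset.sum_eq_single i]
        · simp [hm]
        · intro j _ hj
          by_cases hmj : m = j <;> simp [hmj, hm, hj]
        · simp
  · rintro N ⟨hsymm, hloop, hdeg⟩
    -- key: for j ≠ i, N j i = r j
    have hkey : ∀ j : Fin n, j ≠ i → N j i = r j := by
      have hle : ∀ j ∈ Finset.univ.erase i, N j i ≤ r j := by
        intro j _
        rw [← hdeg j]
        exact Finset.single_le_sum (f := N j) (fun _ _ => Nat.zero_le _) (by simp)
      have hsumeq : ∑ j ∈ Finset.univ.erase i, N j i = ∑ j ∈ Finset.univ.erase i, r j := by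
        rw [← hi, ← hdeg i, ← Finset.sum_erase (h := hloop i)]
        exact Finset.sum_congr rfl fun j _ => (hsymm j i)
      have := (Finset.sum_eq_sum_iff_of_le hle).mp hsumeq
      intro j hj
      exact this j (by simp [hj])
    -- hence for k, j ≠ i with k ≠ j, N k j = 0
    have hzero : ∀ k j : Fin n, k ≠ i → j ≠ i → k ≠ j → N k j = 0 := by
      intro k j hk hj hkj
      have h1 : N k i + N k j ≤ ∑ l, N k l := by
        rw [← Finset.sum_pair (Ne.symm hj)]
        exact Finset.sum_le_sum_of_subset (by simp)
      rw [hdeg k, hkey k hk] at h1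
      omega
    funext k j
    by_cases hkj : k = j
    · simp [hkj, hloop]
    · by_cases hk : k = i
      · subst hk
        simp [hkj, hsymm k j, hkey j (Ne.symm hkj)]
      · by_cases hj : j = i
        · subst hj
          simp [hkj, hk, hkey k hk]
        · simp [hkj, hk, hj, hzero k j hk hj hkj]
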